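/- Let Δ > 0 and C ≥ 0 be real numbers, let p ∈ {0, 1}, and let f : ℕ → ℤ satisfy |f(k) − k·Δ| ≤ C and f(k) ≡ p (mod 2) for all integers k ≥ 1. Then the sequence N ↦ (1/N)·∑_{l=0}^{N} (−1)^l · card{k ∈ ℕ : k ≥ 1 and f(k) = l} converges, as N → ∞, to (−1)^p / Δ. -/

import Mathlib

open Finset

/-- Contribution of a good orbit: if `|f(k) - kΔ| ≤ C` and `f(k) ≡ p (mod 2)`
for all `k ≥ 1`, with `Δ > 0` and `p ∈ {0,1}`, then
`(1/N)·∑_{l=0}^{N} (-1)^l · #{k ≥ 1 : f(k) = l} → (-1)^p / Δ`. -/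
theorem stmt_11 (Δ C : ℝ) (hΔ : 0 < Δ) (hC : 0 ≤ C) (p : ℕ) (hp : p = 0 ∨ p = 1)
    (f : ℕ → ℤ)
    (hf : ∀ k : ℕ, 1 ≤ k → |(f k : ℝ) - k * Δ| ≤ C)
    (hpar : ∀ k : ℕ, 1 ≤ k → f k % 2 = (p : ℤ)) :
    Filter.Tendsto
      (fun N : ℕ => (1 / (N : ℝ)) *
        ∑ l ∈ Finset.range (N + 1),
          (-1 : ℝ) ^ l * ({k : ℕ | 1 ≤ k ∧ f k = (l : ℤ)}.ncard : ℝ))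
      Filter.atTop (nhds ((-1 : ℝ) ^ p / Δ)) := by
  set M : ℕ → ℕ := fun N => ⌈((N : ℝ) + C) / Δ⌉₊ with hM
  set A : ℕ → ℕ := fun N =>
    ((Finset.Icc 1 (M N)).filter (fun k => 0 ≤ f k ∧ f k ≤ (N : ℤ))).card with hA
  set a : ℕ := max 1 ⌈C / Δ⌉₊ with ha
  set b : ℕ → ℕ := fun N => ⌊((N : ℝ) - C) / Δ⌋₊ with hb
  -- the set in question equals a finset
  have hset : ∀ N l : ℕ, l ≤ N →
      {k : ℕ | 1 ≤ k ∧ f k = (l : ℤ)} =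
        ↑((Finset.Icc 1 (M N)).filter (fun k => f k = (l : ℤ))) := by
    intro N l hl
    ext k
    simp only [Finset.coe_filter, Finset.mem_Icc, Set.mem_setOf_eq]
    constructor
    · rintro ⟨hk1, hfk⟩
      refine ⟨⟨hk1, ?_⟩, hfk⟩
      have hbnd := abs_le.mp (hf k hk1)
      have hfl : (f k : ℝ) = l := by exact_mod_cast hfk
      have hlN : (l : ℝ) ≤ N := by exact_mod_cast hl
      have h1 : (k : ℝ) * Δ ≤ (N : ℝ) + C := by linarith [hbnd.2]
      have h2 : (k : ℝ) ≤ ((N : ℝ) + C) / Δ := by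
        rw [le_div_iff₀ hΔ]; linarith
      exact_mod_cast h2.trans (Nat.le_ceil _)
    · rintro ⟨⟨hk1, _⟩, hfk⟩
      exact ⟨hk1, hfk⟩
  -- fiberwise count
  have hfib : ∀ N : ℕ,
      ∑ l ∈ Finset.range (N + 1),
        ((((Finset.Icc 1 (M N)).filter (fun k => f k = (l : ℤ))).card : ℝ)) = (A N : ℝ) := by
    intro N
    have e1 : A N = ∑ l ∈ Finset.range (N + 1),
        ((Finset.Icc 1 (M N)).filter (fun k => f k = (l : ℤ))).card := by
      show ((Finset.Icc 1 (M N)).filter (fun k => 0 ≤ f k ∧ f k ≤ (N : ℤ))).card = _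
      rw [Finset.card_eq_sum_card_fiberwise
      (f := fun k => (f k).toNat) (t := Finset.range (N + 1))
      (by
        intro k hk
        simp only [Finset.mem_coe, Finset.mem_filter] at hk
        simp only [Finset.mem_coe, Finset.mem_range]
        omega)]
      apply Finset.sum_congr rfl
      intro l hl
      simp only [Finset.mem_range] at hl
      congr 1
      ext k
      simp only [Finset.mem_filter, Finset.mem_Icc]
      omega
    exact_mod_cast e1.symm
  -- parity
  have hpow : ∀ N l : ℕ,
      ((Finset.Icc 1 (M N)).filter (fun k => f k = (l : ℤ))).Nonempty →
      (-1 : ℝ) ^ l = (-1 : ℝ) ^ p := by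
    rintro N l ⟨k, hk⟩
    simp only [Finset.mem_filter, Finset.mem_Icc] at hk
    have h1 := hpar k hk.1.1
    rw [hk.2] at h1
    have h2 : l % 2 = p := by omega
    rcases hp with rfl | rfl
    · have : Even l := Nat.even_iff.mpr h2
      simp [this.neg_one_pow]
    · have : Odd l := Nat.odd_iff.mpr h2
      simp [this.neg_one_pow]
  -- key identity
  have key : ∀ N : ℕ,
      ∑ l ∈ Finset.range (N + 1),
        (-1 : ℝ) ^ l * ({k : ℕ | 1 ≤ k ∧ f k = (l : ℤ)}.ncard : ℝ)
      = (-1 : ℝ) ^ p * (A N : ℝ) := by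
    intro N
    rw [← hfib N, Finset.mul_sum]
    apply Finset.sum_congr rfl
    intro l hl
    simp only [Finset.mem_range] at hl
    rw [hset N l (by omega), Set.ncard_coe_finset]
    rcases Finset.eq_empty_or_nonempty
        ((Finset.Icc 1 (M N)).filter (fun k => f k = (l : ℤ))) with he | hne
    · rw [he]; simp
    · rw [hpow N l hne]
  -- upper bound on A
  have hup : ∀ N : ℕ, (A N : ℝ) ≤ ((N : ℝ) + C) / Δ + 1 := by
    intro N
    have h1 : A N ≤ M N := by
      calc A N ≤ (Finset.Icc 1 (M N)).card := Finset.card_filter_le _ _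
        _ = M N := by rw [Nat.card_Icc]; omega
    have h0 : (0 : ℝ) ≤ ((N : ℝ) + C) / Δ := by positivity
    have h2 : (M N : ℝ) < ((N : ℝ) + C) / Δ + 1 := Nat.ceil_lt_add_one h0
    have h1' : (A N : ℝ) ≤ (M N : ℝ) := by exact_mod_cast h1
    linarith
  -- lower bound on A
  have hlow : ∀ N : ℕ, ((N : ℝ) - C) / Δ - (a : ℝ) ≤ (A N : ℝ) := by
    intro N
    have hsub : Finset.Icc a (b N) ⊆
        (Finset.Icc 1 (M N)).filter (fun k => 0 ≤ f k ∧ f k ≤ (N : ℤ)) := by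
      intro k hk
      simp only [Finset.mem_Icc] at hk
      obtain ⟨hka, hkb⟩ := hk
      have hk1 : 1 ≤ k := le_trans (le_max_left 1 _) hka
      have hxpos : (0 : ℝ) ≤ ((N : ℝ) - C) / Δ := by
        by_contra h
        push_neg at h
        have hb0 : b N = 0 := by
          rw [hb]; exact Nat.floor_eq_zero.mpr (by linarith)
        omega
      have hbk : (k : ℝ) ≤ ((N : ℝ) - C) / Δ := by
        calc (k : ℝ) ≤ (b N : ℝ) := by exact_mod_cast hkb
          _ ≤ _ := Nat.floor_le hxpos
      have hkΔ : (k : ℝ) * Δ ≤ (N : ℝ) - C := by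
        rw [le_div_iff₀ hΔ] at hbk; exact hbk
      have haC : C ≤ (k : ℝ) * Δ := by
        have h1 : C / Δ ≤ (a : ℝ) := by
          refine le_trans (Nat.le_ceil _) ?_
          exact_mod_cast le_max_right 1 ⌈C / Δ⌉₊
        have h2 : C / Δ ≤ (k : ℝ) := h1.trans (by exact_mod_cast hka)
        calc C = (C / Δ) * Δ := by field_simp
          _ ≤ (k : ℝ) * Δ := mul_le_mul_of_nonneg_right h2 hΔ.le
      have hbnd := abs_le.mp (hf k hk1)
      simp only [Finset.mem_filter, Finset.mem_Icc]
      refine ⟨⟨hk1, ?_⟩, ?_, ?_⟩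
      · have h2 : (k : ℝ) ≤ ((N : ℝ) + C) / Δ := by
          rw [le_div_iff₀ hΔ]; linarith
        exact_mod_cast h2.trans (Nat.le_ceil _)
      · have : (0 : ℝ) ≤ (f k : ℝ) := by linarith [hbnd.1]
        exact_mod_cast this
      · have : (f k : ℝ) ≤ (N : ℝ) := by linarith [hbnd.2]
        exact_mod_cast this
    have hcard := Finset.card_le_card hsub
    have h4 : (b N : ℝ) + 1 - (a : ℝ) ≤ ((Finset.Icc a (b N)).card : ℝ) := by
      rw [Nat.card_Icc]
      by_cases h : a ≤ b N + 1
      · rw [Nat.cast_sub h]; push_cast; linarith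
      · push_neg at h
        have : b N + 1 - a = 0 := by omega
        rw [this]
        have : (b N : ℝ) + 1 < (a : ℝ) := by exact_mod_cast h
        simp; linarith
    have h5 : ((N : ℝ) - C) / Δ - 1 < (b N : ℝ) := Nat.sub_one_lt_floor _
    have hcard' : ((Finset.Icc a (b N)).card : ℝ) ≤ (A N : ℝ) := by exact_mod_cast hcard
    linarith
  -- limits of the bounding sequences
  have hlim : Filter.Tendsto (fun N : ℕ => (A N : ℝ) / N) Filter.atTop (nhds (1 / Δ)) := by
    have hlo : Filter.Tendsto (fun N : ℕ => 1 / Δ - (C / Δ + a) * (1 / (N : ℝ)))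
        Filter.atTop (nhds (1 / Δ)) := by
      have := (tendsto_one_div_atTop_nhds_zero_nat.const_mul (C / Δ + a)).const_sub (1 / Δ)
      simpa using this
    have hhi : Filter.Tendsto (fun N : ℕ => 1 / Δ + (C / Δ + 1) * (1 / (N : ℝ)))
        Filter.atTop (nhds (1 / Δ)) := by
      have := (tendsto_one_div_atTop_nhds_zero_nat.const_mul (C / Δ + 1)).const_add (1 / Δ)
      simpa using this
    refine tendsto_of_tendsto_of_tendsto_of_le_of_le' hlo hhi ?_ ?_
    · filter_upwards [Filter.eventually_ge_atTop 1] with N hN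
      have hN0 : (0 : ℝ) < (N : ℝ) := by exact_mod_cast hN
      have heq : 1 / Δ - (C / Δ + a) * (1 / (N : ℝ))
          = (((N : ℝ) - C) / Δ - (a : ℝ)) / N := by
        field_simp
        ring
      rw [heq]
      gcongr
      exact hlow N
    · filter_upwards [Filter.eventually_ge_atTop 1] with N hN
      have hN0 : (0 : ℝ) < (N : ℝ) := by exact_mod_cast hN
      have heq : 1 / Δ + (C / Δ + 1) * (1 / (N : ℝ))
          = (((N : ℝ) + C) / Δ + 1) / N := by
        field_simp
        ring
      rw [heq]
      gcongr
      exact hup N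
  have hfun : (fun N : ℕ => (1 / (N : ℝ)) *
        ∑ l ∈ Finset.range (N + 1),
          (-1 : ℝ) ^ l * ({k : ℕ | 1 ≤ k ∧ f k = (l : ℤ)}.ncard : ℝ))
      = fun N : ℕ => (-1 : ℝ) ^ p * ((A N : ℝ) / N) := by
    funext N
    rw [key N]
    ring
  rw [hfun]
  have := hlim.const_mul ((-1 : ℝ) ^ p)
  simpa [mul_one_div, div_eq_mul_inv] using this
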